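/- Let (R, ⊕, ·) be a semihyperring. Then R is regular if and only if for every fuzzy right hyperideal λ and every fuzzy left hyperideal μ of R, min(λ, μ) = λ ∘ μ (pointwise), where (λ ∘ μ)(x) = sup{min(λ(y), μ(z)) : y, z ∈ R, x = y·z} (the supremum over the empty set being 0). -/

import Mathlib

/-- The unit interval `[0,1]` is a complete lattice. -/
noncomputable instance : Fact ((0:ℝ) ≤ 1) := ⟨zero_le_one⟩

/-- A semihyperring `(R, ⊕, ·)`: a hyperoperation `hadd` (with nonempty values),
a binary multiplication `mul`, and an element `zero`, satisfying commutativity and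
(extended) associativity of `⊕`, associativity of `·`, two-sided distributivity of
`·` over `⊕` (as sets), and `0 ⊕ x = {x}`, `0·x = 0 = x·0`. -/
class Semihyperring (R : Type*) where
  hadd : R → R → Set R
  mul : R → R → R
  zero : R
  hadd_nonempty : ∀ x y : R, (hadd x y).Nonempty
  hadd_comm : ∀ x y : R, hadd x y = hadd y x
  hadd_assoc : ∀ x y z : R, (⋃ w ∈ hadd y z, hadd x w) = ⋃ w ∈ hadd x y, hadd w z
  mul_assoc : ∀ x y z : R, mul (mul x y) z = mul x (mul y z)
  left_distrib : ∀ x y z : R, (fun w => mul x w) '' hadd y z = hadd (mul x y) (mul x z)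
  right_distrib : ∀ x y z : R, (fun w => mul w z) '' hadd x y = hadd (mul x z) (mul y z)
  zero_hadd : ∀ x : R, hadd zero x = {x}
  hadd_zero : ∀ x : R, hadd x zero = {x}
  zero_mul : ∀ x : R, mul zero x = zero
  mul_zero : ∀ x : R, mul x zero = zero

namespace Semihyperring

variable {R : Type*} [Semihyperring R]

/-- The hyperoperation `⊕` extended to subsets: `A ⊕ B = ⋃ {a ⊕ b : a ∈ A, b ∈ B}`. -/
def haddSet (A B : Set R) : Set R := ⋃ a ∈ A, ⋃ b ∈ B, hadd a b

/-- The hypersum `x₁ ⊕ x₂ ⊕ ⋯ ⊕ xₚ` of a list of elements (the empty hypersum is `{0}`,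
which is neutral since `0 ⊕ x = {x}`). -/
def hsumList : List R → Set R
  | [] => {zero}
  | x :: xs => haddSet {x} (hsumList xs)

/-- A (two-sided) hyperideal: a nonempty subset closed under `⊕` and under
multiplication by arbitrary elements of `R` on both sides. -/
def IsHyperideal (I : Set R) : Prop :=
  I.Nonempty ∧ (∀ x ∈ I, ∀ y ∈ I, hadd x y ⊆ I) ∧
    (∀ r : R, ∀ x ∈ I, mul r x ∈ I ∧ mul x r ∈ I)

/-- A right hyperideal. -/
def IsRightHyperideal (I : Set R) : Prop :=
  I.Nonempty ∧ (∀ x ∈ I, ∀ y ∈ I, hadd x y ⊆ I) ∧ (∀ x ∈ I, ∀ r : R, mul x r ∈ I)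

/-- A left hyperideal. -/
def IsLeftHyperideal (I : Set R) : Prop :=
  I.Nonempty ∧ (∀ x ∈ I, ∀ y ∈ I, hadd x y ⊆ I) ∧ (∀ x ∈ I, ∀ r : R, mul r x ∈ I)

/-- The product of two subsets:
`AB = {x : x ∈ a₁b₁ ⊕ ⋯ ⊕ aₚbₚ for some p ≥ 1, aᵢ ∈ A, bᵢ ∈ B}`. -/
def setProd (A B : Set R) : Set R :=
  {x | ∃ l : List (R × R), l ≠ [] ∧ (∀ p ∈ l, p.1 ∈ A ∧ p.2 ∈ B) ∧
    x ∈ hsumList (l.map fun p => mul p.1 p.2)}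

/-- `R` is fully idempotent if every hyperideal `I` satisfies `I² = I`. -/
def FullyIdempotent (R : Type*) [Semihyperring R] : Prop :=
  ∀ I : Set R, IsHyperideal I → setProd I I = I

/-- `R` is (von Neumann) regular if every `x` satisfies `x = x·a·x` for some `a`. -/
def Regular (R : Type*) [Semihyperring R] : Prop :=
  ∀ x : R, ∃ a : R, x = mul (mul x a) x

/-- A fuzzy hyperideal of `R`: a function `μ : R → [0,1]` with
`inf {μ z : z ∈ x ⊕ y} ≥ min (μ x) (μ y)` and `μ (x·y) ≥ max (μ x) (μ y)`. -/
def IsFuzzyHyperideal (μ : R → unitInterval) : Prop :=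
  (∀ x y : R, μ x ⊓ μ y ≤ ⨅ z ∈ hadd x y, μ z) ∧
  (∀ x y : R, μ x ⊔ μ y ≤ μ (mul x y))

/-- A fuzzy right hyperideal: `inf {λ z : z ∈ x ⊕ y} ≥ min (λ x) (λ y)` and `λ (x·y) ≥ λ x`. -/
def IsFuzzyRightHyperideal (μ : R → unitInterval) : Prop :=
  (∀ x y : R, μ x ⊓ μ y ≤ ⨅ z ∈ hadd x y, μ z) ∧
  (∀ x y : R, μ x ≤ μ (mul x y))

/-- A fuzzy left hyperideal: `inf {λ z : z ∈ x ⊕ y} ≥ min (λ x) (λ y)` and `λ (x·y) ≥ λ y`. -/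
def IsFuzzyLeftHyperideal (μ : R → unitInterval) : Prop :=
  (∀ x y : R, μ x ⊓ μ y ≤ ⨅ z ∈ hadd x y, μ z) ∧
  (∀ x y : R, μ y ≤ μ (mul x y))

/-- The product `λμ` of fuzzy subsets:
`(λμ)(x) = ⋁ { ⋀_{1≤i≤p} (λ yᵢ ⊓ μ zᵢ) : p ≥ 1, x ∈ y₁z₁ ⊕ ⋯ ⊕ yₚzₚ }`. -/
noncomputable def fprod (lam mu : R → unitInterval) (x : R) : unitInterval :=
  sSup {t | ∃ l : List (R × R), l ≠ [] ∧
    x ∈ hsumList (l.map fun p => mul p.1 p.2) ∧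
    t = ⨅ p ∈ l, lam p.1 ⊓ mu p.2}

/-- The sum `λ ⊕ μ` of fuzzy subsets:
`(λ ⊕ μ)(x) = ⋁ { λ y ⊓ μ z : x ∈ y ⊕ z }`. -/
noncomputable def fsum (lam mu : R → unitInterval) (x : R) : unitInterval :=
  sSup {t | ∃ y z : R, x ∈ hadd y z ∧ t = lam y ⊓ mu z}

/-- The composition `λ ∘ μ` of fuzzy subsets:
`(λ ∘ μ)(x) = ⋁ { λ y ⊓ μ z : x = y·z }` (with `⋁ ∅ = 0`). -/
noncomputable def fcomp (lam mu : R → unitInterval) (x : R) : unitInterval :=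
  sSup {t | ∃ y z : R, x = mul y z ∧ t = lam y ⊓ mu z}

/-- A fuzzy prime hyperideal: a fuzzy hyperideal `η` such that for all fuzzy hyperideals
`λ, μ`, `λμ ≤ η` implies `λ ≤ η` or `μ ≤ η`. -/
def IsFuzzyPrimeHyperideal (η : R → unitInterval) : Prop :=
  IsFuzzyHyperideal η ∧ ∀ lam mu : R → unitInterval, IsFuzzyHyperideal lam →
    IsFuzzyHyperideal mu → fprod lam mu ≤ η → lam ≤ η ∨ mu ≤ η

/-- A fuzzy irreducible hyperideal: a fuzzy hyperideal `η` such that for all fuzzy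
hyperideals `λ, μ`, `min (λ, μ) = η` (pointwise) implies `λ = η` or `μ = η`. -/
def IsFuzzyIrreducibleHyperideal (η : R → unitInterval) : Prop :=
  IsFuzzyHyperideal η ∧ ∀ lam mu : R → unitInterval, IsFuzzyHyperideal lam →
    IsFuzzyHyperideal mu → lam ⊓ mu = η → lam = η ∨ mu = η

/-- `FP R`: the set of proper fuzzy prime hyperideals of `R`
(`η` is proper if it is not the constant function `1`). -/
def FP (R : Type*) [Semihyperring R] : Set (R → unitInterval) :=
  {η | IsFuzzyPrimeHyperideal η ∧ η ≠ fun _ => 1}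

/-- `O λ = {μ ∈ FP R : λ ≰ μ}`. -/
def O (lam : R → unitInterval) : Set (R → unitInterval) :=
  {mu ∈ FP R | ¬ lam ≤ mu}

/-- The sum `Σᵢ ηᵢ` of an arbitrary family of fuzzy subsets:
`(Σᵢ ηᵢ)(x) = ⋁ { ⋀_{1≤k≤p} η_{i_k} (x_k) : p ≥ 1, x ∈ x₁ ⊕ ⋯ ⊕ xₚ }`. -/
noncomputable def famSum {ι : Type*} (η : ι → R → unitInterval) (x : R) : unitInterval :=
  sSup {t | ∃ l : List (ι × R), l ≠ [] ∧ x ∈ hsumList (l.map Prod.snd) ∧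
    t = ⨅ p ∈ l, η p.1 p.2}

end Semihyperring

namespace Semihyperring

variable {R : Type*} [Semihyperring R]

lemma mem_hsumList_cons {a w : R} {l : List R} :
    w ∈ hsumList (a :: l) ↔ ∃ b ∈ hsumList l, w ∈ hadd a b := by
  simp [hsumList, haddSet]

lemma hsumList_singleton (a : R) : hsumList [a] = {a} := by
  ext w
  simp [hsumList, haddSet, hadd_zero]

lemma hadd_subset_hsumList_append :
    ∀ {l1 : List R} {u v w : R} {l2 : List R}, u ∈ hsumList l1 → v ∈ hsumList l2 →
      w ∈ hadd u v → w ∈ hsumList (l1 ++ l2)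
  | [], u, v, w, l2, hu, hv, hw => by
      simp only [hsumList, Set.mem_singleton_iff] at hu
      subst hu
      rw [zero_hadd] at hw
      simpa using hw ▸ hv
  | a :: l1', u, v, w, l2, hu, hv, hw => by
      rw [mem_hsumList_cons] at hu
      obtain ⟨u', hu', huu⟩ := hu
      have hmem : w ∈ ⋃ s ∈ hadd a u', hadd s v := Set.mem_biUnion huu hw
      rw [← hadd_assoc] at hmem
      obtain ⟨s, hs, hws⟩ := Set.mem_iUnion₂.1 hmem
      have hs' : s ∈ hsumList (l1' ++ l2) :=
        hadd_subset_hsumList_append hu' hv hs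
      exact mem_hsumList_cons.2 ⟨s, hs', hws⟩

lemma mul_mem_hsumList_map_left (c : R) :
    ∀ {l : List R} {w : R}, w ∈ hsumList l →
      mul c w ∈ hsumList (l.map fun t => mul c t)
  | [], w, hw => by
      simp only [hsumList, Set.mem_singleton_iff, List.map_nil] at hw ⊢
      rw [hw, mul_zero]
  | a :: l, w, hw => by
      rw [mem_hsumList_cons] at hw
      obtain ⟨b, hb, hwb⟩ := hw
      have h1 : mul c w ∈ hadd (mul c a) (mul c b) := by
        rw [← left_distrib]
        exact ⟨w, hwb, rfl⟩
      exact mem_hsumList_cons.2 ⟨mul c b, mul_mem_hsumList_map_left c hb, h1⟩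

lemma mul_mem_hsumList_map_right (c : R) :
    ∀ {l : List R} {w : R}, w ∈ hsumList l →
      mul w c ∈ hsumList (l.map fun t => mul t c)
  | [], w, hw => by
      simp only [hsumList, Set.mem_singleton_iff, List.map_nil] at hw ⊢
      rw [hw, zero_mul]
  | a :: l, w, hw => by
      rw [mem_hsumList_cons] at hw
      obtain ⟨b, hb, hwb⟩ := hw
      have h1 : mul w c ∈ hadd (mul a c) (mul b c) := by
        rw [← right_distrib]
        exact ⟨w, hwb, rfl⟩
      exact mem_hsumList_cons.2 ⟨mul b c, mul_mem_hsumList_map_right c hb, h1⟩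

lemma hsumList_subst {l : List R} {L : List (List R)}
    (h : List.Forall₂ (fun t m => t ∈ hsumList m) l L) :
    ∀ {w : R}, w ∈ hsumList l → w ∈ hsumList L.flatten := by
  induction h with
  | nil => intro w hw; simpa using hw
  | cons ha hl ih =>
      intro w hw
      rw [mem_hsumList_cons] at hw
      obtain ⟨b, hb, hwb⟩ := hw
      exact hadd_subset_hsumList_append ha (ih hb) hwb

lemma hsumList_collapse {x : R} :
    ∀ {l : List R}, (∀ t ∈ l, ∃ a, t = mul (mul x a) x) →
      ∀ {w : R}, w ∈ hsumList l → ∃ a, w = mul (mul x a) x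
  | [], _, w, hw => by
      simp only [hsumList, Set.mem_singleton_iff] at hw
      exact ⟨zero, by rw [hw, mul_zero, zero_mul]⟩
  | t :: l, hl, w, hw => by
      obtain ⟨b, hb, hwb⟩ := mem_hsumList_cons.1 hw
      obtain ⟨a1, ha1⟩ := hl t (by simp)
      obtain ⟨a2, ha2⟩ := hsumList_collapse (fun t ht => hl t (by simp [ht])) hb
      subst ha1 ha2
      have h1 : w ∈ hadd (mul (mul x a1) x) (mul (mul x a2) x) := hwb
      rw [← right_distrib] at h1
      obtain ⟨u, hu, huw⟩ := h1
      rw [← left_distrib] at hu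
      obtain ⟨c, hc, hcu⟩ := hu
      exact ⟨c, by rw [← huw, ← hcu]⟩

/-- Membership in the right hyperideal generated by `x`. -/
inductive MemR (x : R) : R → Prop
  | base : MemR x x
  | mulr (y r : R) : MemR x y → MemR x (mul y r)
  | add (y z w : R) : MemR x y → MemR x z → w ∈ hadd y z → MemR x w

/-- Membership in the left hyperideal generated by `x`. -/
inductive MemL (x : R) : R → Prop
  | base : MemL x x
  | mull (y r : R) : MemL x y → MemL x (mul r y)
  | add (y z w : R) : MemL x y → MemL x z → w ∈ hadd y z → MemL x w

lemma MemR.struct {x y : R} (h : MemR x y) :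
    ∃ l : List R, (∀ t ∈ l, t = x ∨ ∃ r, t = mul x r) ∧ y ∈ hsumList l := by
  induction h with
  | base => exact ⟨[x], by simp, by rw [hsumList_singleton]; rfl⟩
  | mulr y r _ ih =>
      obtain ⟨l, hl, hy⟩ := ih
      refine ⟨l.map fun t => mul t r, ?_, mul_mem_hsumList_map_right r hy⟩
      intro t ht
      simp only [List.mem_map] at ht
      obtain ⟨s, hs, rfl⟩ := ht
      rcases hl s hs with rfl | ⟨r', rfl⟩
      · exact Or.inr ⟨r, rfl⟩
      · exact Or.inr ⟨mul r' r, mul_assoc x r' r⟩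
  | add y z w _ _ hw ihy ihz =>
      obtain ⟨l1, hl1, hy⟩ := ihy
      obtain ⟨l2, hl2, hz⟩ := ihz
      refine ⟨l1 ++ l2, ?_, hadd_subset_hsumList_append hy hz hw⟩
      intro t ht
      rcases List.mem_append.1 ht with ht | ht
      · exact hl1 t ht
      · exact hl2 t ht

lemma MemL.struct {x y : R} (h : MemL x y) :
    ∃ l : List R, (∀ t ∈ l, t = x ∨ ∃ r, t = mul r x) ∧ y ∈ hsumList l := by
  induction h with
  | base => exact ⟨[x], by simp, by rw [hsumList_singleton]; rfl⟩
  | mull y r _ ih =>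
      obtain ⟨l, hl, hy⟩ := ih
      refine ⟨l.map fun t => mul r t, ?_, mul_mem_hsumList_map_left r hy⟩
      intro t ht
      simp only [List.mem_map] at ht
      obtain ⟨s, hs, rfl⟩ := ht
      rcases hl s hs with rfl | ⟨r', rfl⟩
      · exact Or.inr ⟨r, rfl⟩
      · exact Or.inr ⟨mul r r', (mul_assoc r r' x).symm⟩
  | add y z w _ _ hw ihy ihz =>
      obtain ⟨l1, hl1, hy⟩ := ihy
      obtain ⟨l2, hl2, hz⟩ := ihz
      refine ⟨l1 ++ l2, ?_, hadd_subset_hsumList_append hy hz hw⟩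
      intro t ht
      rcases List.mem_append.1 ht with ht | ht
      · exact hl1 t ht
      · exact hl2 t ht

/-- The key combinatorial lemma: if `x = y·z` with `y` in the right hyperideal
generated by `x` and `z` in the left hyperideal generated by `x`, then `x = x·a·x`
for some `a`. -/
lemma regular_of_factor {x y z : R} (hxyz : x = mul y z)
    (hy : MemR x y) (hz : MemL x z) : ∃ a, x = mul (mul x a) x := by
  classical
  obtain ⟨l1, hl1, hy1⟩ := hy.struct
  obtain ⟨l2, hl2, hz2⟩ := hz.struct
  -- first expansion: x ∈ hypersum of products t·s, t ∈ l1, s ∈ l2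
  have h1 : mul y z ∈ hsumList (l1.map fun t => mul t z) :=
    mul_mem_hsumList_map_right z hy1
  set M : List R := (l1.map fun t => l2.map fun s => mul t s).flatten with hM
  have hforall : List.Forall₂ (fun t m => t ∈ hsumList m)
      (l1.map fun t => mul t z) (l1.map fun t => l2.map fun s => mul t s) := by
    rw [List.forall₂_map_right_iff, List.forall₂_map_left_iff]
    refine List.forall₂_same.2 fun t _ => ?_
    exact mul_mem_hsumList_map_left t hz2
  have hxM : x ∈ hsumList M := by
    rw [hxyz]
    exact hsumList_subst hforall h1
  -- elements of M are either x·x or of the good form x·a·x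
  have hMform : ∀ m ∈ M, m = mul x x ∨ ∃ a, m = mul (mul x a) x := by
    intro m hm
    rw [hM] at hm
    simp only [List.mem_flatten, List.mem_map] at hm
    obtain ⟨L, ⟨t, ht, rfl⟩, hm⟩ := hm
    simp only [List.mem_map] at hm
    obtain ⟨s, hs, rfl⟩ := hm
    rcases hl1 t ht with h1 | ⟨r, h1⟩ <;> rcases hl2 s hs with h2 | ⟨r', h2⟩ <;>
      rw [h1, h2]
    · exact Or.inl rfl
    · exact Or.inr ⟨r', (mul_assoc x r' x).symm⟩
    · exact Or.inr ⟨r, rfl⟩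
    · exact Or.inr ⟨mul r r', by rw [← mul_assoc x r r', mul_assoc (mul x r) r' x]⟩
  -- substitute x into the x·x terms
  set f : R → List R := fun m =>
    if ∃ a, m = mul (mul x a) x then [m] else M.map fun t => mul x t with hf
  have hforall2 : List.Forall₂ (fun t m => t ∈ hsumList m) M (M.map f) := by
    rw [List.forall₂_map_right_iff]
    refine List.forall₂_same.2 fun m hm => ?_
    by_cases hgood : ∃ a, m = mul (mul x a) x
    · rw [hf]; simp only [if_pos hgood]
      rw [hsumList_singleton]; rfl
    · rcases hMform m hm with hbad | hgood'
      · rw [hf]; simp only [if_neg hgood]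
        rw [hbad]
        exact mul_mem_hsumList_map_left x hxM
      · exact absurd hgood' hgood
  have hxMf : x ∈ hsumList (M.map f).flatten := hsumList_subst hforall2 hxM
  refine hsumList_collapse ?_ hxMf
  intro t ht
  simp only [List.mem_flatten, List.mem_map] at ht
  obtain ⟨L, ⟨m, hm, rfl⟩, ht⟩ := ht
  by_cases hgood : ∃ a, m = mul (mul x a) x
  · rw [hf] at ht; simp only [if_pos hgood, List.mem_singleton] at ht
    subst ht; exact hgood
  · rw [hf] at ht; simp only [if_neg hgood, List.mem_map] at ht
    obtain ⟨m', hm', rfl⟩ := ht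
    rcases hMform m' hm' with rfl | ⟨a, rfl⟩
    · exact ⟨x, by rw [mul_assoc]⟩
    · exact ⟨mul x a, by rw [mul_assoc x (mul x a) x, mul_assoc x a x]⟩

end Semihyperring

open Semihyperring in
/-- `R` is regular iff `min (λ, μ) = λ ∘ μ` for every fuzzy right hyperideal
`λ` and every fuzzy left hyperideal `μ` of `R`. -/
theorem regular_iff_inf_eq_fcomp (R : Type*) [Semihyperring R] :
    Regular R ↔
      ∀ lam mu : R → unitInterval, IsFuzzyRightHyperideal lam →
        IsFuzzyLeftHyperideal mu → lam ⊓ mu = fcomp lam mu := by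
  constructor
  · -- regular → equality
    intro hreg lam mu hlam hmu
    funext x
    apply le_antisymm
    · obtain ⟨a, ha⟩ := hreg x
      have hmem : lam (mul x a) ⊓ mu x ∈
          {t | ∃ y z : R, x = mul y z ∧ t = lam y ⊓ mu z} :=
        ⟨mul x a, x, ha, rfl⟩
      calc (lam ⊓ mu) x = lam x ⊓ mu x := rfl
        _ ≤ lam (mul x a) ⊓ mu x := inf_le_inf_right _ (hlam.2 x a)
        _ ≤ fcomp lam mu x := le_sSup hmem
    · refine sSup_le ?_
      rintro t ⟨y, z, hx, rfl⟩
      have h1 : lam y ≤ lam x := hx ▸ hlam.2 y z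
      have h2 : mu z ≤ mu x := hx ▸ hmu.2 y z
      exact inf_le_inf h1 h2
  · -- equality → regular
    intro h x
    classical
    set lam : R → unitInterval := fun w => if MemR x w then 1 else 0 with hlamdef
    set mu : R → unitInterval := fun w => if MemL x w then 1 else 0 with hmudef
    have hlam : IsFuzzyRightHyperideal lam := by
      constructor
      · intro a b
        refine le_iInf fun w => le_iInf fun hw => ?_
        by_cases ha : MemR x a
        · by_cases hb : MemR x b
          · have : MemR x w := MemR.add a b w ha hb hw
            simp only [hlamdef, if_pos this]
            exact unitInterval.le_one'
          · refine le_trans inf_le_right ?_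
            simp only [hlamdef, if_neg hb]
            exact unitInterval.nonneg'
        · refine le_trans inf_le_left ?_
          simp only [hlamdef, if_neg ha]
          exact unitInterval.nonneg'
      · intro a b
        by_cases ha : MemR x a
        · simp only [hlamdef, if_pos ha, if_pos (MemR.mulr a b ha), le_refl]
        · simp only [hlamdef, if_neg ha]
          exact unitInterval.nonneg'
    have hmu : IsFuzzyLeftHyperideal mu := by
      constructor
      · intro a b
        refine le_iInf fun w => le_iInf fun hw => ?_
        by_cases ha : MemL x a
        · by_cases hb : MemL x b
          · have : MemL x w := MemL.add a b w ha hb hw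
            simp only [hmudef, if_pos this]
            exact unitInterval.le_one'
          · refine le_trans inf_le_right ?_
            simp only [hmudef, if_neg hb]
            exact unitInterval.nonneg'
        · refine le_trans inf_le_left ?_
          simp only [hmudef, if_neg ha]
          exact unitInterval.nonneg'
      · intro a b
        by_cases hb : MemL x b
        · simp only [hmudef, if_pos hb, if_pos (MemL.mull b a hb), le_refl]
        · simp only [hmudef, if_neg hb]
          exact unitInterval.nonneg'
    have heq := congrFun (h lam mu hlam hmu) x
    have hone : (lam ⊓ mu) x = 1 := by
      simp only [Pi.inf_apply, hlamdef, hmudef, if_pos MemR.base, if_pos MemL.base,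
        inf_idem]
    -- extract a witness factorization
    have hwit : ∃ y z : R, x = mul y z ∧ MemR x y ∧ MemL x z := by
      by_contra hc
      push_neg at hc
      have hle : fcomp lam mu x ≤ 0 := by
        refine sSup_le ?_
        rintro t ⟨y, z, hx, rfl⟩
        by_cases hy : MemR x y
        · have hz : ¬ MemL x z := fun hz => (hc y z hx hy) hz
          refine le_trans inf_le_right ?_
          simp only [hmudef, if_neg hz, le_refl]
        · refine le_trans inf_le_left ?_
          simp only [hlamdef, if_neg hy, le_refl]
      rw [← heq, hone] at hle
      have : (1 : unitInterval) = 0 := le_antisymm hle unitInterval.nonneg'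
      exact one_ne_zero (congrArg Subtype.val this)
    obtain ⟨y, z, hx, hy, hz⟩ := hwit
    obtain ⟨a, ha⟩ := regular_of_factor hx hy hz
    exact ⟨a, ha⟩
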